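/- For k ≥ 2 and r ≤ n with r ≤ (k-1)(2n)/k, if F is a k-wise intersecting family of independent r-subsets of the perfect matching M_n, then |F| ≤ 2^{r-1} C(n-1, r-1). -/

import Mathlib

/-- The vertex set of the perfect matching `M_n` is modeled as `ZMod (2n)`, with edges
`{v, v + n}`. A set is independent if it contains no matched pair. -/
def Indep (n : ℕ) (S : Finset (ZMod (2 * n))) : Prop :=
  ∀ v ∈ S, v + (n : ZMod (2 * n)) ∉ S

/-- A cyclic ordering of the vertices: positions are `ZMod (2n)`. It is good if matched
vertices are placed exactly `n` apart. -/
def IsGood (n : ℕ) (c : ZMod (2 * n) ≃ ZMod (2 * n)) : Prop :=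
  ∀ x, c (x + (n : ZMod (2 * n))) = c x + (n : ZMod (2 * n))

/-- Two cyclic orderings are identified if they differ by a rotation of positions. -/
def rotSetoidM (n : ℕ) : Setoid (ZMod (2 * n) ≃ ZMod (2 * n)) where
  r c d := ∃ t : ZMod (2 * n), ∀ x, c x = d (x + t)
  iseqv := by
    refine ⟨fun c => ⟨0, fun x => by rw [add_zero]⟩, ?_, ?_⟩
    · rintro c d ⟨t, h⟩
      refine ⟨-t, fun x => ?_⟩
      rw [h (x + -t), add_assoc, neg_add_cancel, add_zero]
    · rintro c d e ⟨t, h⟩ ⟨s, h'⟩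
      exact ⟨t + s, fun x => by rw [h, h', add_assoc]⟩

/-- The interval of length `r` starting at position `x` in the cyclic ordering `c`. -/
def mInterval (n r : ℕ) (c : ZMod (2 * n) ≃ ZMod (2 * n)) (x : ZMod (2 * n)) :
    Finset (ZMod (2 * n)) :=
  (Finset.range r).image (fun (i : ℕ) => c (x + (i : ZMod (2 * n))))

open scoped Classical

namespace KWaux
open Finset

lemma mod_small (m a : ℕ) (hm : 0 < m) (h : a < 2*m) :
    a % m = if a < m then a else a - m := by
  split
  · exact Nat.mod_eq_of_lt ‹_›
  · rw [Nat.mod_eq_sub_mod (by omega), Nat.mod_eq_of_lt (by omega)]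

variable {n : ℕ}

lemma valN (hn : 0 < n) : ((n : ℕ) : ZMod (2*n)).val = n := by
  haveI : NeZero (2*n) := ⟨by omega⟩
  exact ZMod.val_cast_of_lt (by omega)

lemma cast_val (hn : 0 < n) (a : ZMod (2*n)) : ((a.val : ℕ) : ZMod (2*n)) = a := by
  haveI : NeZero (2*n) := ⟨by omega⟩
  simp [ZMod.natCast_val, ZMod.cast_id]

lemma val_lt' (hn : 0 < n) (a : ZMod (2*n)) : a.val < 2*n := by
  haveI : NeZero (2*n) := ⟨by omega⟩
  exact ZMod.val_lt a

lemma val_natCast_lt (hn : 0 < n) {d : ℕ} (hd : d < 2*n) : ((d:ℕ) : ZMod (2*n)).val = d := by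
  haveI : NeZero (2*n) := ⟨by omega⟩
  exact ZMod.val_cast_of_lt hd

lemma val_inj' (hn : 0 < n) {a b : ZMod (2*n)} (h : a.val = b.val) : a = b := by
  rw [← cast_val hn a, ← cast_val hn b, h]

lemma add_n_n (hn : 0 < n) (v : ZMod (2*n)) : v + (n : ZMod (2*n)) + n = v := by
  have h2 : ((n + n : ℕ) : ZMod (2*n)) = 0 := by
    rw [show n + n = 2*n by ring, ZMod.natCast_self]
  rw [add_assoc, show ((n : ℕ) : ZMod (2*n)) + n = 0 by push_cast at h2 ⊢; exact h2, add_zero]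

lemma val_add_n (hn : 0 < n) (v : ZMod (2*n)) :
    (v + (n : ZMod (2*n))).val = if v.val < n then v.val + n else v.val - n := by
  haveI : NeZero (2*n) := ⟨by omega⟩
  have hv := ZMod.val_lt v
  rw [ZMod.val_add, valN hn, mod_small (2*n) _ (by omega) (by omega)]
  split <;> split <;> omega

lemma natCast_inj' (hn : 0 < n) {i j : ℕ} (hi : i < 2*n) (hj : j < 2*n)
    (h : ((i:ℕ) : ZMod (2*n)) = (j:ℕ)) : i = j := by
  rw [← val_natCast_lt hn hi, ← val_natCast_lt hn hj, h]

/-- Katona's circle lemma. -/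
lemma katona (n r : ℕ) [NeZero (2*n)] (hn : 0 < n) (hrn : r ≤ n)
    (F : Finset (Finset (ZMod (2*n))))
    (hint : ∀ A ∈ F, ∀ B ∈ F, ∃ v, v ∈ A ∧ v ∈ B)
    (c : ZMod (2*n) ≃ ZMod (2*n)) :
    (Finset.univ.filter (fun x => mInterval n r c x ∈ F)).card ≤ r := by
  set S := Finset.univ.filter (fun x => mInterval n r c x ∈ F) with hS
  rcases S.eq_empty_or_nonempty with h | ⟨x0, hx0⟩
  · simp [h]
  have key : ∀ y y', y ∈ S → y' ∈ S →
      ∃ s t : ℕ, s < r ∧ t < r ∧ y + (s : ZMod (2*n)) = y' + (t : ZMod (2*n)) := by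
    intro y y' hy hy'
    rw [hS, mem_filter] at hy hy'
    obtain ⟨v, hv1, hv2⟩ := hint _ hy.2 _ hy'.2
    simp only [mInterval, mem_image, mem_range] at hv1 hv2
    obtain ⟨s, hs, hsv⟩ := hv1
    obtain ⟨t, ht, htv⟩ := hv2
    exact ⟨s, t, hs, ht, c.injective (hsv.trans htv.symm)⟩
  have hr1 : 1 ≤ r := by
    obtain ⟨s, t, hs, ht, -⟩ := key x0 x0 hx0 hx0; omega
  have diff : ∀ y y', y ∈ S → y' ∈ S → (y - y').val < r ∨ 2*n - r < (y - y').val := by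
    intro y y' hy hy'
    obtain ⟨s, t, hs, ht, heq⟩ := key y y' hy hy'
    set d := (y - y').val with hd
    have hdlt : d < 2*n := val_lt' hn _
    have hy_eq : y = y' + ((d : ℕ) : ZMod (2*n)) := by rw [hd, cast_val hn]; ring
    have hcast : ((d + s : ℕ) : ZMod (2*n)) = ((t : ℕ) : ZMod (2*n)) := by
      rw [hy_eq] at heq
      push_cast at heq ⊢
      linear_combination heq
    have hmod : (d + s) % (2*n) = t % (2*n) := by
      rwa [ZMod.natCast_eq_natCast_iff'] at hcast
    rw [mod_small (2*n) (d+s) (by omega) (by omega),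
      Nat.mod_eq_of_lt (show t < 2*n by omega)] at hmod
    split at hmod <;> omega
  have disj : ∀ y y', y ∈ S → y' ∈ S → y = y' + ((r:ℕ) : ZMod (2*n)) → False := by
    intro y y' hy hy' he
    obtain ⟨s, t, hs, ht, heq⟩ := key y y' hy hy'
    rw [he] at heq
    have hcast : ((r + s : ℕ) : ZMod (2*n)) = ((t : ℕ) : ZMod (2*n)) := by
      push_cast at heq ⊢
      linear_combination heq
    rw [ZMod.natCast_eq_natCast_iff'] at hcast
    rw [Nat.mod_eq_of_lt (show r + s < 2*n by omega),
      Nat.mod_eq_of_lt (show t < 2*n by omega)] at hcast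
    omega
  have hmain := Finset.card_le_card_of_injOn
    (f := fun y => if (y - x0).val < r then (y - x0).val else (y - x0).val - (2*n - r))
    (s := S) (t := Finset.range r) ?_ ?_
  · rw [card_range] at hmain; exact hmain
  · intro y hy
    have hd := diff y x0 hy hx0
    have hlt := val_lt' hn (y - x0)
    simp only [Finset.mem_coe, mem_range]
    split <;> omega
  · intro y hy y' hy' h
    simp only at h
    have hdy : y = x0 + (((y - x0).val : ℕ) : ZMod (2*n)) := by rw [cast_val hn]; ring
    have hdy' : y' = x0 + (((y' - x0).val : ℕ) : ZMod (2*n)) := by rw [cast_val hn]; ring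
    have hdlt := val_lt' hn (y - x0)
    have hdlt' := val_lt' hn (y' - x0)
    have hdd := diff y x0 hy hx0
    have hdd' := diff y' x0 hy' hx0
    set d := (y - x0).val with hd
    set d' := (y' - x0).val with hd'
    have cancel : ∀ a : ZMod (2*n), a + ((2*n - r + r : ℕ) : ZMod (2*n)) = a := by
      intro a
      rw [show 2*n - r + r = 2*n by omega, ZMod.natCast_self, add_zero]
    by_cases h1 : d < r <;> by_cases h2 : d' < r
    · rw [if_pos h1, if_pos h2] at h
      rw [hdy, hdy', h]
    · rw [if_pos h1, if_neg h2] at h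
      exfalso
      refine disj y y' hy hy' ?_
      have hdval : d' = d + (2*n - r) := by omega
      rw [hdy, hdy', hdval]
      push_cast
      have := cancel (x0 + ((d:ℕ) : ZMod (2*n)))
      push_cast at this
      linear_combination -this
    · rw [if_neg h1, if_pos h2] at h
      exfalso
      refine disj y' y hy' hy ?_
      have hdval : d = d' + (2*n - r) := by omega
      rw [hdy, hdy', hdval]
      push_cast
      have := cancel (x0 + ((d':ℕ) : ZMod (2*n)))
      push_cast at this
      linear_combination -this
    · rw [if_neg h1, if_neg h2] at h
      have : d = d' := by omega
      rw [hdy, hdy', this]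


/-- The number of good cyclic orderings is at most `n! * 2^n`. -/
lemma good_card (n : ℕ) [NeZero (2*n)] (hn : 0 < n) :
    (Finset.univ.filter (fun c => IsGood n c)).card ≤ n.factorial * 2^n := by
  classical
  set t : Finset ((Fin n → Fin n) × (Fin n → Bool)) :=
    (Finset.univ.filter (fun g : Fin n → Fin n => Function.Injective g)) ×ˢ Finset.univ with ht
  have hinjcard : (Finset.univ.filter
      (fun g : Fin n → Fin n => Function.Injective g)).card = Fintype.card (Fin n ↪ Fin n) := by
    rw [← Finset.card_univ]
    refine Finset.card_bij (fun g hg => (⟨g, (Finset.mem_filter.mp hg).2⟩ : Fin n ↪ Fin n))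
      (fun g hg => Finset.mem_univ _) ?_ ?_
    · intro g hg g' hg' h
      have h' : (⟨g, (Finset.mem_filter.mp hg).2⟩ : Fin n ↪ Fin n)
          = ⟨g', (Finset.mem_filter.mp hg').2⟩ := h
      simpa using congrArg (fun e : Fin n ↪ Fin n => (e : Fin n → Fin n)) h'
    · intro e _
      exact ⟨e, Finset.mem_filter.mpr ⟨Finset.mem_univ _, e.injective⟩, rfl⟩
  have htcard : t.card = n.factorial * 2^n := by
    rw [ht, Finset.card_product, Finset.card_univ, hinjcard,
      Fintype.card_embedding_eq, Fintype.card_fin, Nat.descFactorial_self]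
    simp
  rw [← htcard]
  refine Finset.card_le_card_of_injOn
    (fun c => ((fun i : Fin n => (⟨(c ((i:ℕ) : ZMod (2*n))).val % n, Nat.mod_lt _ hn⟩ : Fin n)),
               (fun i : Fin n => decide ((c ((i:ℕ) : ZMod (2*n))).val < n)))) ?_ ?_
  · intro c hc
    rw [Finset.mem_coe, Finset.mem_filter] at hc
    have hgood := hc.2
    rw [Finset.mem_coe, ht, Finset.mem_product]
    refine ⟨Finset.mem_filter.mpr ⟨Finset.mem_univ _, ?_⟩, Finset.mem_univ _⟩
    intro i j hij
    have hij' : (c ((i:ℕ) : ZMod (2*n))).val % n = (c ((j:ℕ) : ZMod (2*n))).val % n := by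
      simpa [Fin.mk.injEq] using hij
    set u := c ((i:ℕ) : ZMod (2*n)) with hu
    set w := c ((j:ℕ) : ZMod (2*n)) with hw
    have hu2 := val_lt' hn u
    have hw2 := val_lt' hn w
    rw [mod_small n u.val hn hu2, mod_small n w.val hn hw2] at hij'
    have hin : (i : ℕ) < n := i.isLt
    have hjn : (j : ℕ) < n := j.isLt
    have hcases : u.val = w.val ∨ w.val = u.val + n ∨ u.val = w.val + n := by
      split at hij' <;> split at hij' <;> omega
    rcases hcases with h | h | h
    · have : u = w := val_inj' hn h
      have := c.injective (hu ▸ hw ▸ this)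
      exact Fin.ext (natCast_inj' hn (by omega) (by omega) this)
    · -- w = u + n
      have hun : u.val < n := by omega
      have hweq : w = u + (n : ZMod (2*n)) := by
        refine val_inj' hn ?_
        rw [val_add_n hn, if_pos hun, h]
      have : c ((j:ℕ) : ZMod (2*n)) = c (((i:ℕ) : ZMod (2*n)) + n) := by
        rw [hgood, ← hu, ← hweq, hw]
      have hj : ((j:ℕ) : ZMod (2*n)) = (((i:ℕ) + n : ℕ) : ZMod (2*n)) := by
        push_cast
        exact c.injective this
      have := natCast_inj' hn (by omega) (by omega) hj
      omega
    · -- u = w + n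
      have hwn : w.val < n := by omega
      have hweq : u = w + (n : ZMod (2*n)) := by
        refine val_inj' hn ?_
        rw [val_add_n hn, if_pos hwn, h]
      have : c ((i:ℕ) : ZMod (2*n)) = c (((j:ℕ) : ZMod (2*n)) + n) := by
        rw [hgood, ← hw, ← hweq, hu]
      have hi : ((i:ℕ) : ZMod (2*n)) = (((j:ℕ) + n : ℕ) : ZMod (2*n)) := by
        push_cast
        exact c.injective this
      have := natCast_inj' hn (by omega) (by omega) hi
      omega
  · intro c hc c' hc' h
    rw [Finset.mem_coe, Finset.mem_filter] at hc hc'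
    have hgood := hc.2
    have hgood' := hc'.2
    simp only [Prod.mk.injEq] at h
    have h1 := h.1
    have h2 := h.2
    have hval : ∀ i : Fin n, c ((i:ℕ) : ZMod (2*n)) = c' ((i:ℕ) : ZMod (2*n)) := by
      intro i
      have e1 : (c ((i:ℕ) : ZMod (2*n))).val % n = (c' ((i:ℕ) : ZMod (2*n))).val % n := by
        have := congrFun h1 i
        simpa [Fin.mk.injEq] using this
      have e2 : ((c ((i:ℕ) : ZMod (2*n))).val < n) ↔ ((c' ((i:ℕ) : ZMod (2*n))).val < n) := by
        have := congrFun h2 i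
        simpa [decide_eq_decide] using this
      have hu2 := val_lt' hn (c ((i:ℕ) : ZMod (2*n)))
      have hw2 := val_lt' hn (c' ((i:ℕ) : ZMod (2*n)))
      refine val_inj' hn ?_
      rw [mod_small n _ hn hu2, mod_small n _ hn hw2] at e1
      split at e1 <;> split at e1 <;> omega
    refine Equiv.ext fun p => ?_
    by_cases hp : p.val < n
    · have hpe : p = (((⟨p.val, hp⟩ : Fin n) : ℕ) : ZMod (2*n)) := by
        simp [cast_val hn]
      rw [hpe]
      exact hval _
    · have hplt := val_lt' hn p
      set q : ZMod (2*n) := ((p.val - n : ℕ) : ZMod (2*n)) with hq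
      have hqe : q = (((⟨p.val - n, by omega⟩ : Fin n) : ℕ) : ZMod (2*n)) := by rw [hq]
      have hpq : p = q + (n : ZMod (2*n)) := by
        rw [hq, ← Nat.cast_add, show p.val - n + n = p.val by omega, cast_val hn]
      rw [hpq, hgood, hgood', hqe, hval]

/-- The cyclic arrangement built from a starting position, an enumeration of `A`,
an enumeration of representatives of the remaining edges, and signs. -/
def buildF (n r : ℕ) (x : ZMod (2*n)) (a b : ℕ → ZMod (2*n)) (s : ℕ → Bool)
    (p : ZMod (2*n)) : ZMod (2*n) :=
  if (p - x).val < r then a (p - x).val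
  else if (p - x).val < n then
    (if s ((p - x).val - r) then b ((p - x).val - r) else b ((p - x).val - r) + n)
  else if (p - x).val < n + r then a ((p - x).val - n) + n
  else (if s ((p - x).val - n - r) then b ((p - x).val - n - r) + n
        else b ((p - x).val - n - r))

lemma buildF_eval (hn : 0 < n) (r : ℕ) (x : ZMod (2*n)) (a b : ℕ → ZMod (2*n))
    (s : ℕ → Bool) (d : ℕ) (hd : d < 2*n) :
    buildF n r x a b s (x + (d : ZMod (2*n))) =
      if d < r then a d
      else if d < n then (if s (d - r) then b (d - r) else b (d - r) + n)
      else if d < n + r then a (d - n) + n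
      else (if s (d - n - r) then b (d - n - r) + n else b (d - n - r)) := by
  have hv : (x + (d : ZMod (2*n)) - x).val = d := by
    rw [add_sub_cancel_left, val_natCast_lt hn hd]
  simp only [buildF, hv]

lemma buildF_good (hn : 0 < n) {r : ℕ} (hrn : r ≤ n) (x : ZMod (2*n))
    (a b : ℕ → ZMod (2*n)) (s : ℕ → Bool) (p : ZMod (2*n)) :
    buildF n r x a b s (p + (n : ZMod (2*n))) = buildF n r x a b s p + n := by
  set d := (p - x).val with hd
  have hdlt : d < 2*n := val_lt' hn _
  have hrw : p = x + ((d : ℕ) : ZMod (2*n)) := by rw [hd, cast_val hn]; ring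
  have hvn : (p + (n : ZMod (2*n)) - x).val = if d < n then d + n else d - n := by
    have h0 : p + (n : ZMod (2*n)) - x = (p - x) + n := by ring
    rw [h0, val_add_n hn, ← hd]
  have e0 : x + (((p + (n : ZMod (2*n)) - x).val : ℕ) : ZMod (2*n)) = p + n := by
    rw [cast_val hn]; ring
  by_cases h1 : d < n
  · have e1 : p + (n : ZMod (2*n)) = x + (((d + n : ℕ)) : ZMod (2*n)) := by
      rw [← e0]; congr 2; rw [hvn, if_pos h1]
    rw [e1, buildF_eval hn r x a b s (d+n) (by omega)]
    conv_rhs => rw [hrw, buildF_eval hn r x a b s d hdlt]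
    by_cases h2 : d < r
    · rw [if_neg (show ¬(d+n < r) by omega), if_neg (show ¬(d+n < n) by omega),
        if_pos (show d+n < n+r by omega), show d+n-n = d by omega, if_pos h2]
    · rw [if_neg (show ¬(d+n < r) by omega), if_neg (show ¬(d+n < n) by omega),
        if_neg (show ¬(d+n < n+r) by omega), show d+n-n-r = d-r by omega,
        if_neg h2, if_pos h1]
      cases hs : s (d - r) <;> simp [hs, add_n_n hn]
  · have e1 : p + (n : ZMod (2*n)) = x + (((d - n : ℕ)) : ZMod (2*n)) := by
      rw [← e0]; congr 2; rw [hvn, if_neg h1]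
    rw [e1, buildF_eval hn r x a b s (d-n) (by omega)]
    conv_rhs => rw [hrw, buildF_eval hn r x a b s d hdlt]
    by_cases h2 : d < n + r
    · rw [if_pos (show d-n < r by omega), if_neg (show ¬(d < r) by omega),
        if_neg h1, if_pos h2, add_n_n hn]
    · rw [if_neg (show ¬(d-n < r) by omega), if_pos (show d-n < n by omega),
        if_neg (show ¬(d < r) by omega), if_neg h1,
        if_neg (show ¬(d < n+r) by omega)]
      cases hs : s (d - n - r) <;> simp [hs, add_n_n hn]

/-- Enumeration function extended to `ℕ`. -/
def aFun (n m : ℕ) (S : Finset (ZMod (2*n))) (α : Fin m ≃ {v // v ∈ S}) (i : ℕ) :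
    ZMod (2*n) :=
  if h : i < m then (α ⟨i, h⟩ : ZMod (2*n)) else 0

def sFun (m : ℕ) (s : Fin m → Bool) (i : ℕ) : Bool :=
  if h : i < m then s ⟨i, h⟩ else false


lemma TA_lower (n r : ℕ) [NeZero (2*n)] (hn : 0 < n) (hr1 : 1 ≤ r) (hrn : r ≤ n)
    (A : Finset (ZMod (2*n))) (hA : A.card = r) (hI : Indep n A) :
    2*n * (r.factorial * ((n-r).factorial * 2^(n-r))) ≤
      (Finset.univ.filter (fun p : (ZMod (2*n) ≃ ZMod (2*n)) × ZMod (2*n) =>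
        IsGood n p.1 ∧ mInterval n r p.1 p.2 = A)).card := by
  classical
  have hAn : ∀ v ∈ A, v + (n : ZMod (2*n)) ∉ A := hI
  -- the set of representatives of edges missing A
  set B : Finset (ZMod (2*n)) :=
    Finset.univ.filter (fun v => v.val < n ∧ v ∉ A ∧ v + (n : ZMod (2*n)) ∉ A) with hB
  have hBmem : ∀ v ∈ B, v.val < n ∧ v ∉ A ∧ v + (n : ZMod (2*n)) ∉ A := by
    intro v hv
    rw [hB, Finset.mem_filter] at hv
    exact hv.2
  -- |B| = n - r
  set R : Finset (ZMod (2*n)) := Finset.univ.filter (fun v => v.val < n) with hR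
  have hRcard : R.card = n := by
    have : R.card = (Finset.univ : Finset (Fin n)).card := by
      refine Finset.card_bij' (i := fun v hv => (⟨v.val, (Finset.mem_filter.mp hv).2⟩ : Fin n))
        (j := fun i _ => ((i : ℕ) : ZMod (2*n))) (fun v hv => Finset.mem_univ _)
        (fun i _ => ?_) (fun v hv => ?_) (fun i _ => ?_)
      · rw [hR, Finset.mem_filter]
        exact ⟨Finset.mem_univ _, by rw [val_natCast_lt hn (by omega)]; exact i.isLt⟩
      · simp [cast_val hn]
      · ext
        simp [val_natCast_lt hn (show (i:ℕ) < 2*n by omega)]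
    rw [this, Finset.card_univ, Fintype.card_fin]
  have hR2card : (R.filter (fun v => v ∈ A ∨ v + (n : ZMod (2*n)) ∈ A)).card = r := by
    rw [← hA]
    refine Finset.card_nbij' (i := fun v => if v ∈ A then v else v + (n : ZMod (2*n)))
      (j := fun a => if a.val < n then a else a + (n : ZMod (2*n))) ?_ ?_ ?_ ?_
    · intro v hv
      rw [Finset.mem_coe, Finset.mem_filter] at hv
      beta_reduce
      rcases hv.2 with h | h
      · rw [if_pos h]; exact h
      · by_cases h' : v ∈ A
        · rw [if_pos h']; exact h'
        · rw [if_neg h']; exact h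
    · intro a ha
      beta_reduce
      rw [Finset.mem_coe, Finset.mem_filter, hR, Finset.mem_filter]
      by_cases h' : a.val < n
      · rw [if_pos h']
        exact ⟨⟨Finset.mem_univ _, h'⟩, Or.inl ha⟩
      · rw [if_neg h']
        have hlt := val_lt' hn a
        refine ⟨⟨Finset.mem_univ _, by rw [val_add_n hn, if_neg h']; omega⟩, Or.inr ?_⟩
        rw [add_n_n hn]; exact ha
    · intro v hv
      rw [Finset.mem_coe, Finset.mem_filter, hR, Finset.mem_filter] at hv
      beta_reduce
      by_cases h' : v ∈ A
      · rw [if_pos h', if_pos hv.1.2]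
      · have hvn : v + (n : ZMod (2*n)) ∈ A := hv.2.resolve_left h'
        rw [if_neg h', if_neg (by rw [val_add_n hn, if_pos hv.1.2]; omega), add_n_n hn]
    · intro a ha
      beta_reduce
      by_cases h' : a.val < n
      · rw [if_pos h', if_pos (Finset.mem_coe.mp ha)]
      · rw [if_neg h', if_neg (hAn a ha), add_n_n hn]
  have hBcard : B.card = n - r := by
    have hsplit := Finset.card_filter_add_card_filter_not
      (s := R) (p := fun v => v ∈ A ∨ v + (n : ZMod (2*n)) ∈ A)
    have hBeq : B = R.filter (fun v => ¬(v ∈ A ∨ v + (n : ZMod (2*n)) ∈ A)) := by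
      ext v
      rw [hB, Finset.mem_filter, Finset.mem_filter, hR, Finset.mem_filter]
      constructor
      · rintro ⟨h1, h2, h3, h4⟩; exact ⟨⟨h1, h2⟩, by tauto⟩
      · rintro ⟨⟨h1, h2⟩, h3⟩; push_neg at h3; exact ⟨h1, h2, h3.1, h3.2⟩
    rw [hBeq]
    omega
  -- the enumeration equivalences exist
  have hcardA : Fintype.card {v // v ∈ A} = r := by rw [Fintype.card_coe, hA]
  have hcardB : Fintype.card {v // v ∈ B} = n - r := by rw [Fintype.card_coe, hBcard]
  have eA : Fin r ≃ {v // v ∈ A} := (Fintype.equivFinOfCardEq hcardA).symm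
  have eB : Fin (n-r) ≃ {v // v ∈ B} := (Fintype.equivFinOfCardEq hcardB).symm
  -- evaluation lemmas
  have heval1 : ∀ (x : ZMod (2*n)) (α : Fin r ≃ {v // v ∈ A})
      (β : Fin (n-r) ≃ {v // v ∈ B}) (s : Fin (n-r) → Bool) (i : Fin r),
      buildF n r x (aFun n r A α) (aFun n (n-r) B β) (sFun (n-r) s)
        (x + (((i:ℕ) : ℕ) : ZMod (2*n))) = (α i : ZMod (2*n)) := by
    intro x α β s i
    rw [buildF_eval hn r x _ _ _ (i:ℕ) (by omega), if_pos i.isLt]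
    simp [aFun, i.isLt]
  have heval2 : ∀ (x : ZMod (2*n)) (α : Fin r ≃ {v // v ∈ A})
      (β : Fin (n-r) ≃ {v // v ∈ B}) (s : Fin (n-r) → Bool) (i : Fin r),
      buildF n r x (aFun n r A α) (aFun n (n-r) B β) (sFun (n-r) s)
        (x + ((n + (i:ℕ) : ℕ) : ZMod (2*n))) = (α i : ZMod (2*n)) + n := by
    intro x α β s i
    have hi := i.isLt
    rw [buildF_eval hn r x _ _ _ (n + (i:ℕ)) (by omega),
      if_neg (show ¬(n + (i:ℕ) < r) by omega), if_neg (show ¬(n + (i:ℕ) < n) by omega),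
      if_pos (show n + (i:ℕ) < n + r by omega), show n + (i:ℕ) - n = (i:ℕ) by omega]
    simp [aFun, hi]
  have heval3 : ∀ (x : ZMod (2*n)) (α : Fin r ≃ {v // v ∈ A})
      (β : Fin (n-r) ≃ {v // v ∈ B}) (s : Fin (n-r) → Bool) (j : Fin (n-r)),
      buildF n r x (aFun n r A α) (aFun n (n-r) B β) (sFun (n-r) s)
        (x + ((r + (j:ℕ) : ℕ) : ZMod (2*n))) =
        (if s j then (β j : ZMod (2*n)) else (β j : ZMod (2*n)) + n) := by
    intro x α β s j
    have hj := j.isLt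
    rw [buildF_eval hn r x _ _ _ (r + (j:ℕ)) (by omega),
      if_neg (show ¬(r + (j:ℕ) < r) by omega), if_pos (show r + (j:ℕ) < n by omega),
      show r + (j:ℕ) - r = (j:ℕ) by omega]
    simp [aFun, sFun, hj]
  have heval4 : ∀ (x : ZMod (2*n)) (α : Fin r ≃ {v // v ∈ A})
      (β : Fin (n-r) ≃ {v // v ∈ B}) (s : Fin (n-r) → Bool) (j : Fin (n-r)),
      buildF n r x (aFun n r A α) (aFun n (n-r) B β) (sFun (n-r) s)
        (x + ((n + r + (j:ℕ) : ℕ) : ZMod (2*n))) =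
        (if s j then (β j : ZMod (2*n)) + n else (β j : ZMod (2*n))) := by
    intro x α β s j
    have hj := j.isLt
    rw [buildF_eval hn r x _ _ _ (n + r + (j:ℕ)) (by omega),
      if_neg (show ¬(n + r + (j:ℕ) < r) by omega),
      if_neg (show ¬(n + r + (j:ℕ) < n) by omega),
      if_neg (show ¬(n + r + (j:ℕ) < n + r) by omega),
      show n + r + (j:ℕ) - n - r = (j:ℕ) by omega]
    simp [aFun, sFun, hj]
  -- surjectivity
  have hsurj : ∀ (x : ZMod (2*n)) (α : Fin r ≃ {v // v ∈ A})
      (β : Fin (n-r) ≃ {v // v ∈ B}) (s : Fin (n-r) → Bool),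
      Function.Surjective
        (buildF n r x (aFun n r A α) (aFun n (n-r) B β) (sFun (n-r) s)) := by
    intro x α β s v
    by_cases hv : v ∈ A
    · exact ⟨x + (((α.symm ⟨v, hv⟩ : Fin r) : ℕ) : ZMod (2*n)), by rw [heval1]; simp⟩
    by_cases hv2 : v + (n : ZMod (2*n)) ∈ A
    · refine ⟨x + ((n + ((α.symm ⟨v + n, hv2⟩ : Fin r) : ℕ) : ℕ) : ZMod (2*n)), ?_⟩
      rw [heval2]
      simp [add_n_n hn]
    · have hvlt := val_lt' hn v
      set u : ZMod (2*n) := if v.val < n then v else v + (n : ZMod (2*n)) with hu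
      have huB : u ∈ B := by
        rw [hB, Finset.mem_filter]
        refine ⟨Finset.mem_univ _, ?_, ?_, ?_⟩
        · rw [hu]; split
          · assumption
          · rw [val_add_n hn, if_neg (by omega)]; omega
        · rw [hu]; split
          · exact hv
          · exact hv2
        · rw [hu]; split
          · exact hv2
          · rw [add_n_n hn]; exact hv
      set j : Fin (n-r) := β.symm ⟨u, huB⟩ with hj
      have hβj : (β j : ZMod (2*n)) = u := by rw [hj]; simp
      have hvu : v = u ∨ v = u + (n : ZMod (2*n)) := by
        rw [hu]; split
        · left; rfl
        · right; rw [add_n_n hn]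
      rcases hvu with hvu | hvu
      · cases hsj : s j
        · exact ⟨x + ((n + r + (j:ℕ) : ℕ) : ZMod (2*n)),
            by rw [heval4]; simp [hsj, hβj, hvu]⟩
        · exact ⟨x + ((r + (j:ℕ) : ℕ) : ZMod (2*n)),
            by rw [heval3]; simp [hsj, hβj, hvu]⟩
      · cases hsj : s j
        · exact ⟨x + ((r + (j:ℕ) : ℕ) : ZMod (2*n)),
            by rw [heval3]; simp [hsj, hβj, hvu]⟩
        · exact ⟨x + ((n + r + (j:ℕ) : ℕ) : ZMod (2*n)),
            by rw [heval4]; simp [hsj, hβj, hvu]⟩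
  have hbij : ∀ (x : ZMod (2*n)) (α : Fin r ≃ {v // v ∈ A})
      (β : Fin (n-r) ≃ {v // v ∈ B}) (s : Fin (n-r) → Bool),
      Function.Bijective
        (buildF n r x (aFun n r A α) (aFun n (n-r) B β) (sFun (n-r) s)) :=
    fun x α β s => Finite.surjective_iff_bijective.mp (hsurj x α β s)
  -- properties of the built equivalence
  have hgood : ∀ (x : ZMod (2*n)) (α : Fin r ≃ {v // v ∈ A})
      (β : Fin (n-r) ≃ {v // v ∈ B}) (s : Fin (n-r) → Bool),
      IsGood n (Equiv.ofBijective _ (hbij x α β s)) :=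
    fun x α β s p => buildF_good hn hrn x _ _ _ p
  have hintv : ∀ (x : ZMod (2*n)) (α : Fin r ≃ {v // v ∈ A})
      (β : Fin (n-r) ≃ {v // v ∈ B}) (s : Fin (n-r) → Bool),
      mInterval n r (Equiv.ofBijective _ (hbij x α β s)) x = A := by
    intro x α β s
    ext v
    simp only [mInterval, Finset.mem_image, Finset.mem_range]
    constructor
    · rintro ⟨i, hi, rfl⟩
      have h : (Equiv.ofBijective _ (hbij x α β s)) (x + ((i : ℕ) : ZMod (2*n)))
          = ((α ⟨i, hi⟩ : {v // v ∈ A}) : ZMod (2*n)) := heval1 x α β s ⟨i, hi⟩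
      rw [h]
      exact (α ⟨i, hi⟩).2
    · intro hv
      refine ⟨((α.symm ⟨v, hv⟩ : Fin r) : ℕ), (α.symm ⟨v, hv⟩).isLt, ?_⟩
      have h : (Equiv.ofBijective _ (hbij x α β s))
          (x + (((α.symm ⟨v, hv⟩ : Fin r) : ℕ) : ZMod (2*n)))
          = ((α (α.symm ⟨v, hv⟩) : {v // v ∈ A}) : ZMod (2*n)) :=
        heval1 x α β s (α.symm ⟨v, hv⟩)
      rw [h]
      simp
  have hinj : ∀ q q' : ZMod (2*n) × (Fin r ≃ {v // v ∈ A}) ×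
      (Fin (n-r) ≃ {v // v ∈ B}) × (Fin (n-r) → Bool),
      ((Equiv.ofBijective _ (hbij q.1 q.2.1 q.2.2.1 q.2.2.2), q.1)
        : (ZMod (2*n) ≃ ZMod (2*n)) × ZMod (2*n))
      = (Equiv.ofBijective _ (hbij q'.1 q'.2.1 q'.2.2.1 q'.2.2.2), q'.1) → q = q' := by
    rintro ⟨x, α, β, s⟩ ⟨x', α', β', s'⟩ h
    have hx : x = x' := congrArg Prod.snd h
    subst hx
    have h1 : Equiv.ofBijective _ (hbij x α β s) = Equiv.ofBijective _ (hbij x α' β' s') :=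
      congrArg Prod.fst h
    have hf : ∀ p, buildF n r x (aFun n r A α) (aFun n (n-r) B β) (sFun (n-r) s) p
        = buildF n r x (aFun n r A α') (aFun n (n-r) B β') (sFun (n-r) s') p :=
      fun p => DFunLike.congr_fun h1 p
    have hα : α = α' := by
      refine Equiv.ext fun i => Subtype.coe_injective ?_
      have := hf (x + (((i:ℕ) : ℕ) : ZMod (2*n)))
      rwa [heval1, heval1] at this
    have hsβ : ∀ j : Fin (n-r), s j = s' j ∧ β j = β' j := by
      intro j
      have hval := hf (x + ((r + (j:ℕ) : ℕ) : ZMod (2*n)))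
      rw [heval3, heval3] at hval
      have hb := (hBmem _ (β j).2).1
      have hb' := (hBmem _ (β' j).2).1
      have hbn : ((β j : ZMod (2*n)) + n).val = (β j : ZMod (2*n)).val + n := by
        rw [val_add_n hn, if_pos hb]
      have hbn' : ((β' j : ZMod (2*n)) + n).val = (β' j : ZMod (2*n)).val + n := by
        rw [val_add_n hn, if_pos hb']
      cases hs : s j <;> cases hs' : s' j <;> rw [hs, hs'] at hval <;> simp at hval
      · have hval' : (β j : ZMod (2*n)) = (β' j : ZMod (2*n)) := congrArg Subtype.val hval
        exact ⟨rfl, Subtype.coe_injective hval'⟩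
      · exfalso
        have hvv : ((β j : ZMod (2*n)) + n).val = ((β' j : ZMod (2*n))).val :=
          congrArg ZMod.val hval
        rw [hbn] at hvv
        omega
      · exfalso
        have hvv : ((β j : ZMod (2*n))).val = ((β' j : ZMod (2*n)) + n).val :=
          congrArg ZMod.val hval
        rw [hbn'] at hvv
        omega
      · have hval' : (β j : ZMod (2*n)) = (β' j : ZMod (2*n)) := congrArg Subtype.val hval
        exact ⟨rfl, Subtype.coe_injective hval'⟩
    have hs : s = s' := funext fun j => (hsβ j).1
    have hβ : β = β' := Equiv.ext fun j => (hsβ j).2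
    rw [hα, hs, hβ]
  -- counting
  have hDcard : Fintype.card (ZMod (2*n) × (Fin r ≃ {v // v ∈ A}) ×
      (Fin (n-r) ≃ {v // v ∈ B}) × (Fin (n-r) → Bool))
      = 2*n * (r.factorial * ((n-r).factorial * 2^(n-r))) := by
    rw [Fintype.card_prod, Fintype.card_prod, Fintype.card_prod, ZMod.card,
      Fintype.card_equiv eA, Fintype.card_equiv eB, Fintype.card_fin,
      Fintype.card_fun, Fintype.card_fin, Fintype.card_bool]
  rw [← hDcard, ← Finset.card_univ]
  refine Finset.card_le_card_of_injOn
    (fun q => (Equiv.ofBijective _ (hbij q.1 q.2.1 q.2.2.1 q.2.2.2), q.1))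
    (fun q _ => ?_) (fun q _ q' _ h => hinj q q' h)
  rw [Finset.mem_coe, Finset.mem_filter]
  exact ⟨Finset.mem_univ _, hgood q.1 q.2.1 q.2.2.1 q.2.2.2,
    hintv q.1 q.2.1 q.2.2.1 q.2.2.2⟩

end KWaux


/-- For `k ≥ 2` and `r ≤ n` with `r ≤ (k-1)(2n)/k`, a `k`-wise intersecting family of
independent `r`-subsets of `M_n` has size at most `2^(r-1) C(n-1, r-1)`. -/
theorem kwise_intersecting_independent_bound (n r k : ℕ) (hk : 2 ≤ k) (hn : 0 < n)
    (hrn : r ≤ n) (hr : k * r ≤ (k - 1) * (2 * n))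
    (F : Finset (Finset (ZMod (2 * n))))
    (hmem : ∀ A ∈ F, A.card = r ∧ Indep n A)
    (hkw : ∀ f : Fin k → Finset (ZMod (2 * n)), (∀ i, f i ∈ F) → ∃ v, ∀ i, v ∈ f i) :
    F.card ≤ 2 ^ (r - 1) * (n - 1).choose (r - 1) := by
  classical
  haveI : NeZero (2*n) := ⟨by omega⟩
  rcases F.eq_empty_or_nonempty with hF | ⟨A0, hA0⟩
  · simp [hF]
  have hr1 : 1 ≤ r := by
    by_contra hcon
    obtain ⟨v, hv⟩ := hkw (fun _ => A0) (fun _ => hA0)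
    have hc0 := (hmem A0 hA0).1
    have hA0e : A0 = ∅ := Finset.card_eq_zero.mp (by omega)
    have := hv ⟨0, by omega⟩
    rw [hA0e] at this
    exact absurd this (Finset.notMem_empty v)
  have hint : ∀ A ∈ F, ∀ B ∈ F, ∃ v, v ∈ A ∧ v ∈ B := by
    intro A hA B hB
    haveI : NeZero k := ⟨by omega⟩
    obtain ⟨v, hv⟩ := hkw (fun i => if i = 0 then A else B)
      (fun i => by split <;> assumption)
    have h0 := hv 0
    have h1 := hv 1
    have h01 : (1 : Fin k) ≠ 0 := by
      intro h
      have := congrArg Fin.val h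
      rw [Fin.val_one', Fin.val_zero, Nat.mod_eq_of_lt (by omega)] at this
      omega
    rw [if_pos rfl] at h0
    rw [if_neg h01] at h1
    exact ⟨v, h0, h1⟩
  have hTup : (Finset.univ.filter
      (fun p : (ZMod (2*n) ≃ ZMod (2*n)) × ZMod (2*n) =>
        IsGood n p.1 ∧ mInterval n r p.1 p.2 ∈ F)).card
      ≤ (Finset.univ.filter (fun c => IsGood n c)).card * r := by
    rw [Finset.card_eq_sum_card_fiberwise (f := Prod.fst)
      (t := Finset.univ.filter (fun c => IsGood n c))
      (fun p hp => Finset.mem_filter.mpr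
        ⟨Finset.mem_univ _, (Finset.mem_filter.mp hp).2.1⟩)]
    refine le_trans (Finset.sum_le_card_nsmul _ _ r ?_) (by rw [smul_eq_mul])
    intro c _
    refine le_trans (Finset.card_le_card_of_injOn (fun p => p.2) ?_ ?_)
      (KWaux.katona n r hn hrn F hint c)
    · intro p hp
      rw [Finset.mem_coe, Finset.mem_filter] at hp ⊢
      obtain ⟨hp1, hp2⟩ := hp
      rw [Finset.mem_filter] at hp1
      refine ⟨Finset.mem_univ _, ?_⟩
      rw [← hp2]
      exact hp1.2.2
    · intro p hp p' hp' h
      rw [Finset.mem_coe, Finset.mem_filter] at hp hp'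
      exact Prod.ext (hp.2.trans hp'.2.symm) h
  have hGcard := KWaux.good_card n hn
  have hTlow : F.card * (2*n * (r.factorial * ((n-r).factorial * 2^(n-r))))
      ≤ (Finset.univ.filter
      (fun p : (ZMod (2*n) ≃ ZMod (2*n)) × ZMod (2*n) =>
        IsGood n p.1 ∧ mInterval n r p.1 p.2 ∈ F)).card := by
    have hdisj := Finset.card_biUnion (s := F)
      (t := fun A => (Finset.univ.filter
        (fun p : (ZMod (2*n) ≃ ZMod (2*n)) × ZMod (2*n) =>
          IsGood n p.1 ∧ mInterval n r p.1 p.2 ∈ F)).filter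
            (fun p => mInterval n r p.1 p.2 = A))
      (fun A _ A' _ hAA' => Finset.disjoint_left.mpr
        (fun p hp hp' => hAA' (by
          rw [← (Finset.mem_filter.mp hp).2, (Finset.mem_filter.mp hp').2])))
    have hsub : (F.biUnion (fun A => (Finset.univ.filter
        (fun p : (ZMod (2*n) ≃ ZMod (2*n)) × ZMod (2*n) =>
          IsGood n p.1 ∧ mInterval n r p.1 p.2 ∈ F)).filter
            (fun p => mInterval n r p.1 p.2 = A)))
        ⊆ (Finset.univ.filter
        (fun p : (ZMod (2*n) ≃ ZMod (2*n)) × ZMod (2*n) =>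
          IsGood n p.1 ∧ mInterval n r p.1 p.2 ∈ F)) :=
      Finset.biUnion_subset.mpr (fun A _ => Finset.filter_subset _ _)
    have hsum : ∀ A ∈ F, 2*n * (r.factorial * ((n-r).factorial * 2^(n-r)))
        ≤ ((Finset.univ.filter
        (fun p : (ZMod (2*n) ≃ ZMod (2*n)) × ZMod (2*n) =>
          IsGood n p.1 ∧ mInterval n r p.1 p.2 ∈ F)).filter
            (fun p => mInterval n r p.1 p.2 = A)).card := by
      intro A hA
      have hTA := KWaux.TA_lower n r hn hr1 hrn A (hmem A hA).1 (hmem A hA).2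
      have heq : ((Finset.univ.filter
          (fun p : (ZMod (2*n) ≃ ZMod (2*n)) × ZMod (2*n) =>
            IsGood n p.1 ∧ mInterval n r p.1 p.2 ∈ F)).filter
              (fun p => mInterval n r p.1 p.2 = A))
          = Finset.univ.filter
          (fun p : (ZMod (2*n) ≃ ZMod (2*n)) × ZMod (2*n) =>
            IsGood n p.1 ∧ mInterval n r p.1 p.2 = A) := by
        ext p
        simp only [Finset.mem_filter, Finset.mem_univ, true_and]
        constructor
        · rintro ⟨⟨hg, _⟩, he⟩
          exact ⟨hg, he⟩
        · rintro ⟨hg, he⟩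
          exact ⟨⟨hg, he ▸ hA⟩, he⟩
      rw [heq]
      exact hTA
    calc F.card * (2*n * (r.factorial * ((n-r).factorial * 2^(n-r))))
        = ∑ _A ∈ F, 2*n * (r.factorial * ((n-r).factorial * 2^(n-r))) := by
          rw [Finset.sum_const, smul_eq_mul]
      _ ≤ ∑ A ∈ F, ((Finset.univ.filter
            (fun p : (ZMod (2*n) ≃ ZMod (2*n)) × ZMod (2*n) =>
              IsGood n p.1 ∧ mInterval n r p.1 p.2 ∈ F)).filter
                (fun p => mInterval n r p.1 p.2 = A)).card :=
          Finset.sum_le_sum hsum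
      _ = _ := hdisj.symm
      _ ≤ _ := Finset.card_le_card hsub
  have hcomb : F.card * (2*n * (r.factorial * ((n-r).factorial * 2^(n-r))))
      ≤ (n.factorial * 2^n) * r :=
    le_trans hTlow (le_trans hTup (Nat.mul_le_mul_right r hGcard))
  have hD0pos : 0 < 2*n * (r.factorial * ((n-r).factorial * 2^(n-r))) := by
    have h1 := Nat.factorial_pos r
    have h2 := Nat.factorial_pos (n-r)
    positivity
  have hkey : (2 ^ (r - 1) * (n - 1).choose (r - 1))
      * (2*n * (r.factorial * ((n-r).factorial * 2^(n-r))))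
      = (n.factorial * 2^n) * r := by
    obtain ⟨r', rfl⟩ : ∃ r', r = r' + 1 := ⟨r - 1, by omega⟩
    obtain ⟨m, rfl⟩ : ∃ m, n = m + 1 := ⟨n - 1, by omega⟩
    have hr'm : r' ≤ m := by omega
    rw [show m + 1 - (r' + 1) = m - r' by omega, Nat.add_sub_cancel, Nat.add_sub_cancel]
    have hc := Nat.choose_mul_factorial_mul_factorial hr'm
    rw [Nat.factorial_succ r', Nat.factorial_succ m, ← hc,
      show (2:ℕ)^(m+1) = 2 * (2^r' * 2^(m-r')) by
        rw [← pow_add, show r' + (m - r') = m by omega, pow_succ]; ring]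
    ring
  have hfin : F.card * (2*n * (r.factorial * ((n-r).factorial * 2^(n-r))))
      ≤ (2 ^ (r - 1) * (n - 1).choose (r - 1))
        * (2*n * (r.factorial * ((n-r).factorial * 2^(n-r)))) := by
    rw [hkey]
    exact hcomb
  exact Nat.le_of_mul_le_mul_right hfin hD0pos
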